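/- Let (X,d) be a complete metric space, R an N-transitive binary relation on X (N ≥ 1), and T : X → X a continuous R-preserving mapping such that for every ε > 0 there is δ > 0 with: x R y and ε ≤ d(x,y) < ε + δ implies d(Tx,Ty) < ε. If there exists x₀ with x₀ R Tx₀, then T has a fixed point. -/

import Mathlib

theorem stmt_14 {X : Type*} [MetricSpace X] [CompleteSpace X]
    (R : X → X → Prop) (N : ℕ) (hN : 1 ≤ N)
    (htrans : ∀ z : ℕ → X, (∀ i ≤ N, R (z i) (z (i + 1))) → R (z 0) (z (N + 1)))
    (T : X → X) (hT : Continuous T)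
    (hpres : ∀ x y : X, R x y → R (T x) (T y))
    (hMK : ∀ ε > (0:ℝ), ∃ δ > (0:ℝ), ∀ x y : X,
      R x y → ε ≤ dist x y → dist x y < ε + δ → dist (T x) (T y) < ε)
    (x₀ : X) (hx₀ : R x₀ (T x₀)) :
    ∃ xs : X, T xs = xs := by
  classical
  obtain ⟨M, rfl⟩ : ∃ M, N = M + 1 := ⟨N - 1, by omega⟩
  set x : ℕ → X := fun n => T^[n] x₀ with hxdef
  have hx_succ : ∀ n, x (n + 1) = T (x n) := fun n => Function.iterate_succ_apply' T n x₀
  -- consecutive relations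
  have hstep : ∀ n, R (x n) (x (n + 1)) := by
    intro n
    induction n with
    | zero => simpa [hxdef] using hx₀
    | succ k ih =>
      have h2 := hpres _ _ ih
      rw [← hx_succ k, ← hx_succ (k + 1)] at h2
      exact h2
  -- nonstrict contraction on related pairs
  have hA : ∀ a b : X, R a b → dist (T a) (T b) ≤ dist a b := by
    intro a b hab
    rcases eq_or_lt_of_le (dist_nonneg : (0:ℝ) ≤ dist a b) with h | h
    · have hab' : a = b := by
        have : dist a b ≤ 0 := le_of_eq h.symm
        exact dist_le_zero.mp this
      subst hab'; simp
    · obtain ⟨δ, hδ, hk⟩ := hMK (dist a b) h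
      exact le_of_lt (hk a b hab le_rfl (by linarith))
  -- key Meir-Keeler consequence
  have hkey : ∀ ε > (0:ℝ), ∃ δ > (0:ℝ), ∀ a b : X, R a b →
      dist a b < ε + δ → dist (T a) (T b) < ε := by
    intro ε hε
    obtain ⟨δ, hδ, h⟩ := hMK ε hε
    refine ⟨δ, hδ, fun a b hab hlt => ?_⟩
    rcases lt_or_ge (dist a b) ε with h' | h'
    · exact lt_of_le_of_lt (hA a b hab) h'
    · exact h a b hab h' hlt
  -- consecutive distances
  set d : ℕ → ℝ := fun n => dist (x n) (x (n + 1)) with hddef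
  have hanti : ∀ n, d (n + 1) ≤ d n := by
    intro n
    have h2 := hA _ _ (hstep n)
    rw [← hx_succ n, ← hx_succ (n + 1)] at h2
    exact h2
  have hanti' : Antitone d := antitone_nat_of_succ_le hanti
  have hdnonneg : ∀ n, 0 ≤ d n := fun n => dist_nonneg
  have hbdd : BddBelow (Set.range d) := ⟨0, by rintro _ ⟨n, rfl⟩; exact hdnonneg n⟩
  have htends : Filter.Tendsto d Filter.atTop (nhds (⨅ n, d n)) :=
    tendsto_atTop_ciInf hanti' hbdd
  set r := ⨅ n, d n with hrdef
  have hrle : ∀ n, r ≤ d n := fun n => ciInf_le hbdd n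
  have hr0 : 0 ≤ r := le_ciInf hdnonneg
  have hrzero : r = 0 := by
    by_contra h
    have hrpos : 0 < r := lt_of_le_of_ne hr0 (Ne.symm h)
    obtain ⟨δ, hδ, hk⟩ := hMK r hrpos
    obtain ⟨n, hn⟩ := (htends.eventually_lt_const (by linarith : r < r + δ)).exists
    have h1 := hk _ _ (hstep n) (hrle n) hn
    rw [← hx_succ n, ← hx_succ (n + 1)] at h1
    exact absurd (hrle (n + 1)) (not_le.mpr h1)
  have htends0 : Filter.Tendsto d Filter.atTop (nhds 0) := by rwa [hrzero] at htends
  -- relations across gaps j*N + 1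
  have hgap : ∀ m j : ℕ, R (x m) (x (m + (j * (M + 1) + 1))) := by
    intro m j
    induction j with
    | zero => simpa using hstep m
    | succ k ih =>
      set z : ℕ → X := fun i => if i = 0 then x m else x (m + k * (M + 1) + i) with hz
      have hz0 : z 0 = x m := by simp [hz]
      have hchain : ∀ i ≤ M + 1, R (z i) (z (i + 1)) := by
        intro i _
        rcases Nat.eq_zero_or_pos i with rfl | hipos
        · have h1 : z 1 = x (m + (k * (M + 1) + 1)) := by
            simp [hz]; ring_nf
          rw [hz0, h1]; exact ih
        · have h1 : z i = x (m + k * (M + 1) + i) := by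
            simp [hz, Nat.pos_iff_ne_zero.mp hipos]
          have h2 : z (i + 1) = x (m + k * (M + 1) + i + 1) := by
            simp [hz]; ring_nf
          rw [h1, h2]; exact hstep _
      have hfin := htrans z hchain
      have hzN : z (M + 1 + 1) = x (m + ((k + 1) * (M + 1) + 1)) := by
        simp [hz]
        congr 1
        ring
      rwa [hz0, hzN] at hfin
  -- chain length bound
  have hchainlen : ∀ (c : ℝ) (a k : ℕ), (∀ i, d (a + i) ≤ c) →
      dist (x a) (x (a + k)) ≤ (k : ℝ) * c := by
    intro c a k hc
    induction k with
    | zero => simp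
    | succ k ih =>
      have h1 : a + (k + 1) = (a + k) + 1 := by ring
      calc dist (x a) (x (a + (k + 1)))
          ≤ dist (x a) (x (a + k)) + dist (x (a + k)) (x (a + k + 1)) := by
            rw [h1]; exact dist_triangle _ _ _
        _ ≤ (k : ℝ) * c + c := add_le_add ih (hc k)
        _ = ((k : ℝ) + 1) * c := by ring
        _ = ((k + 1 : ℕ) : ℝ) * c := by push_cast; ring
  -- Cauchy
  have hcauchy : CauchySeq x := by
    rw [Metric.cauchySeq_iff']
    intro ε hε
    obtain ⟨δ0, hδ0, hk⟩ := hkey (ε / 2) (by positivity)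
    set δ' := min δ0 (ε / 4) with hδ'def
    have hδ'pos : 0 < δ' := lt_min hδ0 (by positivity)
    have hδ'le1 : δ' ≤ δ0 := min_le_left _ _
    have hδ'le2 : δ' ≤ ε / 4 := min_le_right _ _
    set c := δ' / ((M : ℝ) + 2) with hcdef
    have hcpos : 0 < c := by positivity
    have hNc : ((M : ℝ) + 1) * c < δ' := by
      rw [hcdef]
      rw [div_eq_mul_inv, ← mul_assoc]
      rw [mul_comm ((M:ℝ) + 1) δ', mul_assoc]
      have h2 : ((M : ℝ) + 1) * ((M : ℝ) + 2)⁻¹ < 1 := by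
        rw [mul_inv_lt_iff₀ (by positivity)]
        nlinarith [Nat.cast_nonneg (α := ℝ) M]
      nlinarith
    obtain ⟨n₀, hn₀⟩ := Filter.eventually_atTop.mp (htends0.eventually_lt_const hcpos)
    refine ⟨n₀, ?_⟩
    have hclaim : ∀ j, dist (x n₀) (x (n₀ + (j * (M + 1) + 1))) < ε / 2 + δ' := by
      intro j
      induction j with
      | zero =>
        have h1 : d n₀ < c := hn₀ n₀ le_rfl
        have hcle : c ≤ δ' := by
          rw [hcdef, div_le_iff₀ (by positivity)]
          nlinarith [Nat.cast_nonneg (α := ℝ) M]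
        have : dist (x n₀) (x (n₀ + (0 * (M + 1) + 1))) = d n₀ := by norm_num; rfl
        rw [this]
        have hε2 : 0 < ε / 2 := by positivity
        linarith
      | succ k ih =>
        have hrel := hgap n₀ k
        have hmid : dist (x (n₀ + 1)) (x (n₀ + (k * (M + 1) + 1) + 1)) < ε / 2 := by
          have h2 := hk _ _ hrel (by linarith)
          rw [← hx_succ n₀, ← hx_succ (n₀ + (k * (M + 1) + 1))] at h2
          exact h2
        have htail : dist (x (n₀ + (k * (M + 1) + 1) + 1))
            (x ((n₀ + (k * (M + 1) + 1) + 1) + M)) ≤ (M : ℝ) * c :=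
          hchainlen c _ _ (fun i => le_of_lt (hn₀ _ (by omega)))
        have harith : (n₀ + (k * (M + 1) + 1) + 1) + M = n₀ + ((k + 1) * (M + 1) + 1) := by
          have : (k + 1) * (M + 1) = k * (M + 1) + M + 1 := by ring
          rw [this]; ring
        rw [harith] at htail
        have hd0 : d n₀ < c := hn₀ n₀ le_rfl
        calc dist (x n₀) (x (n₀ + ((k + 1) * (M + 1) + 1)))
            ≤ dist (x n₀) (x (n₀ + 1)) +
              dist (x (n₀ + 1)) (x (n₀ + (k * (M + 1) + 1) + 1)) +
              dist (x (n₀ + (k * (M + 1) + 1) + 1)) (x (n₀ + ((k + 1) * (M + 1) + 1))) :=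
              dist_triangle4 _ _ _ _
          _ < c + ε / 2 + (M : ℝ) * c := by
              have : dist (x n₀) (x (n₀ + 1)) = d n₀ := rfl
              rw [this]
              exact add_lt_add_of_lt_of_le (add_lt_add hd0 hmid) htail
          _ = ε / 2 + ((M : ℝ) + 1) * c := by ring
          _ < ε / 2 + δ' := by linarith
    intro n hn
    rcases eq_or_lt_of_le hn with rfl | hlt
    · simp [hε]
    · set k := n - n₀ with hkdef
      have hk1 : 1 ≤ k := by omega
      obtain ⟨j, rr, hrr, hjr⟩ : ∃ j rr, rr ≤ M ∧ k - 1 = j * (M + 1) + rr := by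
        refine ⟨(k - 1) / (M + 1), (k - 1) % (M + 1), ?_, ?_⟩
        · have := Nat.mod_lt (k - 1) (y := M + 1) (by omega)
          omega
        · exact (Nat.div_add_mod' (k - 1) (M + 1)).symm
      have hk2 : k = j * (M + 1) + 1 + rr := by
        set q := j * (M + 1) with hq
        omega
      have hneq : n = (n₀ + (j * (M + 1) + 1)) + rr := by
        have : n = n₀ + k := by omega
        rw [this, hk2]; ring
      have htail : dist (x (n₀ + (j * (M + 1) + 1)))
          (x ((n₀ + (j * (M + 1) + 1)) + rr)) ≤ (rr : ℝ) * c :=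
        hchainlen c _ _ (fun i => le_of_lt (hn₀ _ (by omega)))
      have hrrc : (rr : ℝ) * c < δ' := by
        have h1 : (rr : ℝ) ≤ (M : ℝ) := by exact_mod_cast hrr
        nlinarith
      rw [dist_comm]
      calc dist (x n₀) (x n)
          ≤ dist (x n₀) (x (n₀ + (j * (M + 1) + 1))) +
            dist (x (n₀ + (j * (M + 1) + 1))) (x n) := dist_triangle _ _ _
        _ < (ε / 2 + δ') + δ' := by
            rw [hneq]
            exact add_lt_add_of_lt_of_le (hclaim j) (le_of_lt (lt_of_le_of_lt htail hrrc))
        _ ≤ ε / 2 + ε / 4 + ε / 4 := by linarith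
        _ = ε := by ring
  -- limit is a fixed point
  obtain ⟨xs, hxs⟩ := cauchySeq_tendsto_of_complete hcauchy
  refine ⟨xs, ?_⟩
  have h1 : Filter.Tendsto (fun n => x (n + 1)) Filter.atTop (nhds xs) :=
    hxs.comp (Filter.tendsto_add_atTop_nat 1)
  have h2 : Filter.Tendsto (fun n => T (x n)) Filter.atTop (nhds (T xs)) :=
    (hT.tendsto xs).comp hxs
  have h3 : (fun n => x (n + 1)) = fun n => T (x n) := funext hx_succ
  rw [h3] at h1
  exact tendsto_nhds_unique h2 h1
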